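/- Every finite simple 3-regular graph G on n vertices has a co-secure dominating set of cardinality at most 2n/3; in particular γ_cs(G) ≤ 2n/3, and hence γ_cs(G) ≤ (8/3)·(n/4), i.e., a minimum co-secure dominating set is within a factor 8/3 of the lower bound n/4. -/
import Mathlib


/-- `D` is a dominating set of `G`: every vertex outside `D` has a neighbor in `D`. -/
def IsDomSet {V : Type*} (G : SimpleGraph V) (D : Set V) : Prop :=
  ∀ v ∉ D, ∃ u ∈ D, G.Adj u v

/-- `S` is a co-secure dominating set of `G`. -/
def IsCSDS {V : Type*} (G : SimpleGraph V) (S : Set V) : Prop :=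
  IsDomSet G S ∧ ∀ u ∈ S, ∃ v, v ∉ S ∧ G.Adj u v ∧ IsDomSet G (S \ {u} ∪ {v})

/-- `D` is a double dominating set of `G`: every vertex outside `D` has at
least two neighbors in `D`. -/
def IsDoubleDomSet {V : Type*} (G : SimpleGraph V) (D : Set V) : Prop :=
  ∀ v ∉ D, 2 ≤ (G.neighborSet v ∩ D).ncard

/-- The co-secure domination number `γ_cs(G)`. -/
noncomputable def gammaCS {V : Type*} [Fintype V] (G : SimpleGraph V) : ℕ :=
  sInf {n : ℕ | ∃ S : Set V, IsCSDS G S ∧ S.ncard = n}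

/-- The double domination number `γ₂(G)`. -/
noncomputable def gamma2 {V : Type*} [Fintype V] (G : SimpleGraph V) : ℕ :=
  sInf {n : ℕ | ∃ D : Set V, IsDoubleDomSet G D ∧ D.ncard = n}

theorem stmt11 {V : Type*} [Fintype V] (G : SimpleGraph V)
    (hreg : ∀ v : V, (G.neighborSet v).ncard = 3) :
    (∃ S : Set V, IsCSDS G S ∧ (S.ncard : ℝ) ≤ 2 * (Fintype.card V : ℝ) / 3) ∧
    (gammaCS G : ℝ) ≤ 2 * (Fintype.card V : ℝ) / 3 ∧
    (gammaCS G : ℝ) ≤ (8 / 3) * ((Fintype.card V : ℝ) / 4) := by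
  classical
  have hdeg : ∀ v : V, (G.neighborFinset v).card = 3 := by
    intro v
    have h := hreg v
    rwa [Set.ncard_eq_toFinset_card', ← SimpleGraph.neighborFinset_def] at h
  set P : Finset V → Prop := fun A => ∀ a ∈ A, ((G.neighborFinset a) ∩ A).card ≤ 1 with hPdef
  obtain ⟨A, hAP, hAmax⟩ : ∃ A, P A ∧ ∀ B, P B → B.card ≤ A.card := by
    obtain ⟨A, hA, hmax⟩ := Finset.exists_max_image
      ((Finset.univ : Finset (Finset V)).filter fun B => P B) Finset.card
      ⟨∅, by simp [hPdef]⟩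
    exact ⟨A, (Finset.mem_filter.mp hA).2,
      fun B hB => hmax B (Finset.mem_filter.mpr ⟨Finset.mem_univ _, hB⟩)⟩
  -- consequence of maximality
  have hmaxcons : ∀ s ∉ A, (2 ≤ ((G.neighborFinset s) ∩ A).card) ∨
      (∃ a ∈ A, G.Adj s a ∧ ((G.neighborFinset a) ∩ A).card = 1) := by
    intro s hs
    by_contra hcon
    push_neg at hcon
    obtain ⟨h1, h2⟩ := hcon
    have hP' : P (insert s A) := by
      intro a ha
      rcases Finset.mem_insert.mp ha with rfl | ha
      · have he : (G.neighborFinset a) ∩ insert a A = (G.neighborFinset a) ∩ A := by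
          ext x
          simp only [Finset.mem_inter, Finset.mem_insert, SimpleGraph.mem_neighborFinset]
          constructor
          · rintro ⟨hadj, rfl | hx⟩
            · exact absurd hadj (G.irrefl)
            · exact ⟨hadj, hx⟩
          · rintro ⟨hadj, hx⟩; exact ⟨hadj, Or.inr hx⟩
        rw [he]; omega
      · have hle := hAP a ha
        by_cases hadj : G.Adj a s
        · have h0 : ((G.neighborFinset a) ∩ A).card = 0 := by
            have := h2 a ha hadj.symm
            omega
          have he : (G.neighborFinset a) ∩ insert s A ⊆ insert s ((G.neighborFinset a) ∩ A) := by
            intro x hx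
            simp only [Finset.mem_inter, Finset.mem_insert] at hx ⊢
            tauto
          calc ((G.neighborFinset a) ∩ insert s A).card
              ≤ (insert s ((G.neighborFinset a) ∩ A)).card := Finset.card_le_card he
            _ ≤ ((G.neighborFinset a) ∩ A).card + 1 := Finset.card_insert_le _ _
            _ ≤ 1 := by omega
        · have he : (G.neighborFinset a) ∩ insert s A = (G.neighborFinset a) ∩ A := by
            ext x
            simp only [Finset.mem_inter, Finset.mem_insert, SimpleGraph.mem_neighborFinset]
            constructor
            · rintro ⟨hadjx, rfl | hx⟩
              · exact absurd hadjx hadj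
              · exact ⟨hadjx, hx⟩
            · rintro ⟨hadjx, hx⟩; exact ⟨hadjx, Or.inr hx⟩
          rw [he]; exact hle
    have := hAmax _ hP'
    rw [Finset.card_insert_of_notMem hs] at this
    omega
  -- every vertex of A has at least 2 neighbors outside A
  have hA2out : ∀ a ∈ A, 2 ≤ ((G.neighborFinset a) \ A).card := by
    intro a ha
    have h1 := hAP a ha
    have h2 := Finset.card_inter_add_card_sdiff (G.neighborFinset a) A
    rw [hdeg a] at h2
    omega
  -- the co-secure dominating set
  set S : Set V := (↑A : Set V)ᶜ with hSdef
  have hmemS : ∀ v, v ∈ S ↔ v ∉ A := by intro v; simp [hSdef]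
  have hDom : IsDomSet G S := by
    intro v hv
    have hvA : v ∈ A := by by_contra h; exact hv ((hmemS v).mpr h)
    obtain ⟨u, hu⟩ := Finset.card_pos.mp (show 0 < ((G.neighborFinset v) \ A).card by
      have := hA2out v hvA; omega)
    rw [Finset.mem_sdiff, SimpleGraph.mem_neighborFinset] at hu
    exact ⟨u, (hmemS u).mpr hu.2, hu.1.symm⟩
  have hCS : IsCSDS G S := by
    refine ⟨hDom, fun u hu => ?_⟩
    have huA : u ∉ A := (hmemS u).mp hu
    obtain ⟨v, hvA, hadj⟩ : ∃ v ∈ A, G.Adj u v := by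
      rcases hmaxcons u huA with h | ⟨a, ha, hadj, _⟩
      · obtain ⟨x, hx⟩ := Finset.card_pos.mp
          (show 0 < ((G.neighborFinset u) ∩ A).card by omega)
        rw [Finset.mem_inter, SimpleGraph.mem_neighborFinset] at hx
        exact ⟨x, hx.2, hx.1⟩
      · exact ⟨a, ha, hadj⟩
    refine ⟨v, fun hvS => (hmemS v).mp hvS hvA, hadj, ?_⟩
    intro w hw
    have hwv : w ≠ v := fun h => hw (Set.mem_union_right _ (by simp [h]))
    have hw1 : w ∉ S \ {u} := fun h => hw (Set.mem_union_left _ h)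
    by_cases hwu : w = u
    · subst hwu
      exact ⟨v, Set.mem_union_right _ rfl, hadj.symm⟩
    · have hwS : w ∉ S := by
        intro h
        exact hw1 ⟨h, hwu⟩
      have hwA : w ∈ A := by by_contra h; exact hwS ((hmemS w).mpr h)
      have h2 := hA2out w hwA
      obtain ⟨x, hx, y, hy, hxy⟩ := Finset.one_lt_card.mp
        (show 1 < ((G.neighborFinset w) \ A).card by omega)
      obtain ⟨z, hz, hzu⟩ : ∃ z ∈ (G.neighborFinset w) \ A, z ≠ u := by
        by_cases hxu : x = u
        · exact ⟨y, hy, fun h => hxy (by rw [hxu, h])⟩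
        · exact ⟨x, hx, hxu⟩
      rw [Finset.mem_sdiff, SimpleGraph.mem_neighborFinset] at hz
      exact ⟨z, Set.mem_union_left _ ⟨(hmemS z).mpr hz.2, hzu⟩, hz.1.symm⟩
  -- cardinality bound : |univ \ A| ≤ 2 |A|
  have hcard : (Finset.univ \ A).card ≤ 2 * A.card := by
    set Sfin := (Finset.univ : Finset V) \ A with hSfin
    set dA : V → ℕ := fun v => ((G.neighborFinset v) ∩ A).card with hdA
    set A1 := A.filter (fun a => dA a = 1) with hA1
    set S1 := Sfin.filter (fun s => dA s ≤ 1) with hS1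
    set S2 := Sfin \ S1 with hS2
    have hSnA : ∀ s ∈ Sfin, s ∉ A := fun s hs => (Finset.mem_sdiff.mp hs).2
    have hS1adj : ∀ s ∈ S1, ∃ a ∈ A1, s ∈ G.neighborFinset a ∩ Sfin := by
      intro s hs
      rw [hS1, Finset.mem_filter] at hs
      rcases hmaxcons s (hSnA s hs.1) with h | ⟨a, ha, hadj, h1⟩
      · exact absurd hs.2 (by simp only [hdA]; omega)
      · refine ⟨a, Finset.mem_filter.mpr ⟨ha, h1⟩, ?_⟩
        rw [Finset.mem_inter, SimpleGraph.mem_neighborFinset]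
        exact ⟨hadj.symm, hs.1⟩
    have houtd : ∀ a ∈ A, ((G.neighborFinset a) ∩ Sfin).card = 3 - dA a := by
      intro a ha
      have h1 : (G.neighborFinset a) ∩ Sfin = (G.neighborFinset a) \ A := by
        rw [hSfin]; ext x; simp [Finset.mem_sdiff]
      have h2 := Finset.card_inter_add_card_sdiff (G.neighborFinset a) A
      rw [hdeg a] at h2
      rw [h1]
      simp only [hdA]
      omega
    have hS1card : S1.card ≤ 2 * A1.card := by
      have hsub : S1 ⊆ A1.biUnion (fun a => G.neighborFinset a ∩ Sfin) := by
        intro s hs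
        obtain ⟨a, ha, hmem⟩ := hS1adj s hs
        exact Finset.mem_biUnion.mpr ⟨a, ha, hmem⟩
      calc S1.card ≤ (A1.biUnion (fun a => G.neighborFinset a ∩ Sfin)).card :=
            Finset.card_le_card hsub
        _ ≤ ∑ a ∈ A1, ((G.neighborFinset a) ∩ Sfin).card := Finset.card_biUnion_le
        _ ≤ ∑ _a ∈ A1, 2 := by
            refine Finset.sum_le_sum fun a ha => ?_
            rw [hA1, Finset.mem_filter] at ha
            rw [houtd a ha.1, ha.2]
        _ = 2 * A1.card := by rw [Finset.sum_const, smul_eq_mul, mul_comm]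
    have hdc : ∑ a ∈ A, ((G.neighborFinset a) ∩ Sfin).card = ∑ s ∈ Sfin, dA s := by
      have h1 : ∀ (a : V) (B : Finset V),
          (G.neighborFinset a) ∩ B = B.filter (fun x => G.Adj a x) := by
        intro a B; ext x; simp [SimpleGraph.mem_neighborFinset, and_comm]
      calc ∑ a ∈ A, ((G.neighborFinset a) ∩ Sfin).card
          = ∑ a ∈ A, ∑ s ∈ Sfin, (if G.Adj a s then 1 else 0) := by
            refine Finset.sum_congr rfl fun a _ => ?_
            rw [h1 a Sfin, Finset.card_filter]
        _ = ∑ s ∈ Sfin, ∑ a ∈ A, (if G.Adj a s then 1 else 0) := Finset.sum_comm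
        _ = ∑ s ∈ Sfin, dA s := by
            refine Finset.sum_congr rfl fun s _ => ?_
            simp only [hdA]
            rw [h1 s A, Finset.card_filter]
            refine Finset.sum_congr rfl fun a _ => ?_
            rw [G.adj_comm]
    have hlow : S1.card + 2 * S2.card ≤ ∑ s ∈ Sfin, dA s := by
      have hsplit : S1 ∪ S2 = Sfin := by
        rw [hS2, Finset.union_sdiff_of_subset (Finset.filter_subset _ _)]
      have hdisj : Disjoint S1 S2 := Finset.disjoint_sdiff
      rw [← hsplit, Finset.sum_union hdisj]
      have l1 : S1.card * 1 ≤ ∑ s ∈ S1, dA s := by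
        refine Finset.card_nsmul_le_sum S1 dA 1 fun s hs => ?_
        obtain ⟨a, ha, hmem⟩ := hS1adj s hs
        have ha' : a ∈ A := (Finset.mem_filter.mp ha).1
        rw [Finset.mem_inter, SimpleGraph.mem_neighborFinset] at hmem
        have : a ∈ (G.neighborFinset s) ∩ A := by
          rw [Finset.mem_inter, SimpleGraph.mem_neighborFinset]
          exact ⟨hmem.1.symm, ha'⟩
        have := Finset.card_pos.mpr ⟨a, this⟩
        simp only [hdA]
        omega
      have l2 : S2.card * 2 ≤ ∑ s ∈ S2, dA s := by
        refine Finset.card_nsmul_le_sum S2 dA 2 fun s hs => ?_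
        rw [hS2, Finset.mem_sdiff, hS1, Finset.mem_filter] at hs
        have := hs.2
        push_neg at this
        exact this hs.1
      omega
    have hup : ∑ a ∈ A, ((G.neighborFinset a) ∩ Sfin).card + A1.card ≤ 3 * A.card := by
      calc ∑ a ∈ A, ((G.neighborFinset a) ∩ Sfin).card + A1.card
          = ∑ a ∈ A, (3 - dA a) + ∑ a ∈ A, (if dA a = 1 then 1 else 0) := by
            rw [Finset.sum_congr rfl (fun a ha => houtd a ha), hA1, Finset.card_filter]
        _ = ∑ a ∈ A, ((3 - dA a) + (if dA a = 1 then 1 else 0)) := (Finset.sum_add_distrib).symm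
        _ ≤ ∑ _a ∈ A, 3 := Finset.sum_le_sum fun a _ => by split <;> omega
        _ = 3 * A.card := by rw [Finset.sum_const, smul_eq_mul, mul_comm]
    have hcardsplit : Sfin.card = S1.card + S2.card := by
      have hsplit : S1 ∪ S2 = Sfin := by
        rw [hS2, Finset.union_sdiff_of_subset (Finset.filter_subset _ _)]
      rw [← hsplit, Finset.card_union_of_disjoint Finset.disjoint_sdiff]
    have hA1le : A1.card ≤ A.card := Finset.card_le_card (Finset.filter_subset _ _)
    omega
  -- wrap up
  have hScoe : S = ↑((Finset.univ : Finset V) \ A) := by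
    rw [hSdef, Finset.coe_sdiff, Finset.coe_univ, Set.compl_eq_univ_diff]
  have hSncard : S.ncard = (Finset.univ \ A).card := by rw [hScoe, Set.ncard_coe_finset]
  have hnsplit : (Finset.univ \ A).card + A.card = Fintype.card V := by
    rw [Finset.card_sdiff_add_card_eq_card (Finset.subset_univ A), Finset.card_univ]
  have h3 : 3 * S.ncard ≤ 2 * Fintype.card V := by omega
  have hreal : (S.ncard : ℝ) ≤ 2 * (Fintype.card V : ℝ) / 3 := by
    have := (Nat.cast_le (α := ℝ)).mpr h3
    push_cast at this
    linarith
  have hgle : (gammaCS G : ℝ) ≤ 2 * (Fintype.card V : ℝ) / 3 := by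
    have hle : gammaCS G ≤ S.ncard := Nat.sInf_le ⟨S, hCS, rfl⟩
    exact le_trans (Nat.cast_le.mpr hle) hreal
  refine ⟨⟨S, hCS, hreal⟩, hgle, ?_⟩
  have heq : (8 / 3 : ℝ) * ((Fintype.card V : ℝ) / 4) = 2 * (Fintype.card V : ℝ) / 3 := by ring
  rw [heq]
  exact hgle
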